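/- Let G = F∞ ⋊_α ℤ as above and H_n = ⟨g_i : i ≥ n⟩ ⊆ G. Then the one-sided normalizer semigroup ON_G(H_n) = {g ∈ G : gH_ng⁻¹ ⊆ H_n} equals {vφʳ : v ∈ H_n, r ≥ 0}, where φ denotes the generator of the ℤ-factor of the semidirect product. -/

import Mathlib

namespace OneSidedNormalizerAux

/-- The generating set of `Hₙ`. -/
def HS (n : ℤ) : Set (FreeGroup ℤ) := {x | ∃ i : ℤ, n ≤ i ∧ x = FreeGroup.of i}

lemma mem_invRev {L : List (ℤ × Bool)} {l : ℤ × Bool} (h : l ∈ FreeGroup.invRev L) :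
    ∃ l' ∈ L, l.1 = l'.1 := by
  simp only [FreeGroup.invRev, List.mem_reverse, List.mem_map] at h
  obtain ⟨a, ha, rfl⟩ := h
  exact ⟨a, ha, rfl⟩

lemma letters_ge {n : ℤ} {x : FreeGroup ℤ} (hx : x ∈ Subgroup.closure (HS n)) :
    ∀ l ∈ x.toWord, n ≤ l.1 := by
  induction hx using Subgroup.closure_induction with
  | mem x hx =>
      obtain ⟨i, hi, rfl⟩ := hx
      intro l hl
      rw [FreeGroup.toWord_of] at hl
      simp only [List.mem_singleton] at hl
      rw [hl]; exact hi
  | one => simp [FreeGroup.toWord_one]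
  | mul x y hx hy ihx ihy =>
      intro l hl
      have := (FreeGroup.toWord_mul_sublist x y).subset hl
      rcases List.mem_append.mp this with h | h
      exacts [ihx l h, ihy l h]
  | inv x hx ih =>
      intro l hl
      rw [FreeGroup.toWord_inv] at hl
      obtain ⟨l', hl', he⟩ := mem_invRev hl
      rw [he]; exact ih l' hl'

lemma mk_mem {n : ℤ} : ∀ L : List (ℤ × Bool), (∀ l ∈ L, n ≤ l.1) →
    FreeGroup.mk L ∈ Subgroup.closure (HS n)
  | [], _ => by rw [← FreeGroup.one_eq_mk]; exact one_mem _
  | (a, b) :: L, h => by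
    have h1 : FreeGroup.mk ((a, b) :: L) = FreeGroup.mk [(a, b)] * FreeGroup.mk L := by
      rw [FreeGroup.mul_mk]; rfl
    rw [h1]
    refine mul_mem ?_ (mk_mem L fun l hl => h l (List.mem_cons_of_mem _ hl))
    have ha : n ≤ a := h (a, b) (List.mem_cons_self ..)
    cases b with
    | true => exact Subgroup.subset_closure ⟨a, ha, rfl⟩
    | false =>
      have h2 : FreeGroup.mk [(a, false)] = (FreeGroup.of a)⁻¹ := by
        rw [show FreeGroup.of a = FreeGroup.mk [(a, true)] from rfl, FreeGroup.inv_mk]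
        rfl
      rw [h2]
      exact inv_mem (Subgroup.subset_closure ⟨a, ha, rfl⟩)

/-- The no-cancellation relation for adjacent letters. -/
def R : (ℤ × Bool) → (ℤ × Bool) → Prop := fun a b => ¬(a.1 = b.1 ∧ a.2 = !b.2)

lemma reduce_eq_self : ∀ {L : List (ℤ × Bool)}, List.Chain' R L → FreeGroup.reduce L = L := by
  intro L h
  induction L with
  | nil => rfl
  | cons x xs ih =>
    have hxs : FreeGroup.reduce xs = xs := ih h.tail
    cases xs with
    | nil => rfl
    | cons y ys =>
      have hxy : R x y := (List.isChain_cons_cons.mp h).1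
      rw [FreeGroup.reduce.cons, hxs]
      change (if x.1 = y.1 ∧ x.2 = !y.2 then ys else x :: y :: ys) = x :: y :: ys
      rw [if_neg hxy]

lemma chain_of_reduce : ∀ {L : List (ℤ × Bool)}, FreeGroup.reduce L = L → List.Chain' R L
  | [], _ => List.isChain_nil
  | x :: xs, h => by
    have hsub : List.Sublist (FreeGroup.reduce xs) xs := (FreeGroup.reduce.red).sublist
    rcases ht : FreeGroup.reduce xs with _ | ⟨y, ys⟩
    · have h1 : x :: xs = [x] := by
        conv_lhs => rw [← h]
        rw [FreeGroup.reduce.cons, ht]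
      have : xs = [] := by simpa using h1
      subst this
      exact List.isChain_singleton x
    · rw [ht] at hsub
      have hlen : ys.length + 1 ≤ xs.length := by simpa using hsub.length_le
      by_cases hc : x.1 = y.1 ∧ x.2 = !y.2
      · exfalso
        have h2 : FreeGroup.reduce (x :: xs) = ys := by
          rw [FreeGroup.reduce.cons, ht]
          change (if x.1 = y.1 ∧ x.2 = !y.2 then ys else x :: y :: ys) = ys
          rw [if_pos hc]
        rw [h2] at h
        have := congrArg List.length h
        simp at this
        omega
      · have h2 : FreeGroup.reduce (x :: xs) = x :: y :: ys := by
          rw [FreeGroup.reduce.cons, ht]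
          change (if x.1 = y.1 ∧ x.2 = !y.2 then ys else x :: y :: ys) = x :: y :: ys
          rw [if_neg hc]
        rw [h2] at h
        have hxs' : xs = y :: ys := by
          injection h with _ h3
          exact h3.symm
        have hred : FreeGroup.reduce xs = xs := by rw [ht, hxs']
        have hch := chain_of_reduce hred
        rw [hxs']
        rw [hxs'] at hch
        exact List.isChain_cons_cons.mpr ⟨hc, hch⟩

lemma le_foldr_max : ∀ (L : List ℤ) (b a : ℤ), a ∈ L → a ≤ L.foldr max b
  | [], _, _, h => absurd h List.not_mem_nil
  | x :: xs, b, a, h => by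
    rcases List.mem_cons.mp h with rfl | h
    · exact le_max_left _ _
    · exact le_trans (le_foldr_max xs b a h) (le_max_right _ _)

lemma toWord_conj {v : FreeGroup ℤ} {m : ℤ} (hm : ∀ l ∈ v.toWord, l.1 ≠ m) :
    (v * FreeGroup.of m * v⁻¹).toWord
      = v.toWord ++ [(m, true)] ++ FreeGroup.invRev v.toWord := by
  have h1 : v * FreeGroup.of m * v⁻¹
      = FreeGroup.mk (v.toWord ++ [(m, true)] ++ FreeGroup.invRev v.toWord) := by
    conv_lhs => rw [← FreeGroup.mk_toWord (x := v)]
    rw [show FreeGroup.of m = FreeGroup.mk [(m, true)] from rfl, FreeGroup.inv_mk,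
      FreeGroup.mul_mk, FreeGroup.mul_mk]
  rw [h1, FreeGroup.toWord_mk]
  apply reduce_eq_self
  have hL : List.Chain' R v.toWord := chain_of_reduce (FreeGroup.reduce_toWord v)
  have hLinv : List.Chain' R (FreeGroup.invRev v.toWord) :=
    chain_of_reduce (by rw [FreeGroup.reduce_invRev, FreeGroup.reduce_toWord])
  rw [List.Chain', List.isChain_append]
  refine ⟨?_, hLinv, ?_⟩
  · rw [List.isChain_append]
    refine ⟨hL, List.isChain_singleton _, ?_⟩
    intro x hx y hy
    simp only [List.head?_cons, Option.mem_def, Option.some.injEq] at hy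
    subst hy
    obtain ⟨hne, hlast⟩ := List.mem_getLast?_eq_getLast hx
    have hxmem : x ∈ v.toWord := hlast ▸ List.getLast_mem hne
    exact fun hcon => hm x hxmem hcon.1
  · intro x hx y hy
    rw [List.getLast?_concat] at hx
    have hx' : (m, true) = x := by simpa using hx
    subst hx'
    have hymem : y ∈ FreeGroup.invRev v.toWord := List.mem_of_mem_head? hy
    obtain ⟨l', hl', he⟩ := mem_invRev hymem
    intro hcon
    exact hm l' hl' (by rw [← he, ← hcon.1])

/-- The retraction onto the subgroup generated by `{gᵢ : i ≥ n}`. -/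
def piN (n : ℤ) : FreeGroup ℤ →* FreeGroup ℤ :=
  FreeGroup.lift (fun i => if n ≤ i then FreeGroup.of i else 1)

lemma piN_fix {n : ℤ} {x : FreeGroup ℤ} (hx : x ∈ Subgroup.closure (HS n)) :
    piN n x = x := by
  induction hx using Subgroup.closure_induction with
  | mem x hx =>
      obtain ⟨i, hi, rfl⟩ := hx
      simp [piN, if_pos hi]
  | one => simp
  | mul x y _ _ hx hy => rw [map_mul, hx, hy]
  | inv x _ hx => rw [map_inv, hx]

lemma conj_inl (β : Multiplicative ℤ →* MulAut (FreeGroup ℤ))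
    (g : FreeGroup ℤ ⋊[β] Multiplicative ℤ) (h : FreeGroup ℤ) :
    g * SemidirectProduct.inl h * g⁻¹
      = SemidirectProduct.inl (g.left * β g.right h * g.left⁻¹) := by
  conv_lhs => rw [← SemidirectProduct.inl_left_mul_inr_right g]
  rw [show (SemidirectProduct.inl (g.left * β g.right h * g.left⁻¹) :
        FreeGroup ℤ ⋊[β] Multiplicative ℤ)
      = SemidirectProduct.inl g.left * SemidirectProduct.inl (β g.right h) *
        (SemidirectProduct.inl g.left)⁻¹ by simp only [map_mul, map_inv]]
  rw [SemidirectProduct.inl_aut, mul_inv_rev]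
  simp only [map_inv, mul_assoc]

end OneSidedNormalizerAux

open OneSidedNormalizerAux in
/-- Let `G = F∞ ⋊ ℤ` as in Statement 3 and `Hₙ = ⟨gᵢ : i ≥ n⟩ ≤ G`.
Then the one-sided normalizer semigroup `ON_G(Hₙ) = {g : gHₙg⁻¹ ⊆ Hₙ}` equals
`{vφʳ : v ∈ Hₙ, r ≥ 0}`. -/
theorem oneSidedNormalizer_Hn_in_semidirect_product
    (β : Multiplicative ℤ →* MulAut (FreeGroup ℤ))
    (hβ : ∀ (n i : ℤ), β (Multiplicative.ofAdd n) (FreeGroup.of i) = FreeGroup.of (i + n))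
    (n : ℤ) :
    {g : FreeGroup ℤ ⋊[β] Multiplicative ℤ |
        ∀ x ∈ (Subgroup.closure {x : FreeGroup ℤ | ∃ i : ℤ, n ≤ i ∧ x = FreeGroup.of i}).map
          (SemidirectProduct.inl : FreeGroup ℤ →* FreeGroup ℤ ⋊[β] Multiplicative ℤ),
          g * x * g⁻¹ ∈ (Subgroup.closure {x : FreeGroup ℤ | ∃ i : ℤ, n ≤ i ∧ x = FreeGroup.of i}).map
            (SemidirectProduct.inl : FreeGroup ℤ →* FreeGroup ℤ ⋊[β] Multiplicative ℤ)} =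
      {g : FreeGroup ℤ ⋊[β] Multiplicative ℤ |
        ∃ v ∈ Subgroup.closure {x : FreeGroup ℤ | ∃ i : ℤ, n ≤ i ∧ x = FreeGroup.of i},
          ∃ r : ℤ, 0 ≤ r ∧
            g = SemidirectProduct.inl v * SemidirectProduct.inr (Multiplicative.ofAdd r)} := by
  have hHS : {x : FreeGroup ℤ | ∃ i : ℤ, n ≤ i ∧ x = FreeGroup.of i} = HS n := rfl
  ext g
  simp only [Set.mem_setOf_eq, hHS]
  constructor
  · intro hg
    set v := g.left with hv_def
    set c := g.right with hc_def
    obtain ⟨r, hc⟩ : ∃ r : ℤ, Multiplicative.ofAdd r = c := ⟨Multiplicative.toAdd c, ofAdd_toAdd c⟩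
    have hβc : ∀ i : ℤ, β c (FreeGroup.of i) = FreeGroup.of (i + r) := fun i => by
      rw [← hc]; exact hβ r i
    have hconj : ∀ h ∈ Subgroup.closure (HS n),
        v * β c h * v⁻¹ ∈ Subgroup.closure (HS n) := by
      intro h hh
      have hmem := hg (SemidirectProduct.inl h) (Subgroup.mem_map.mpr ⟨h, hh, rfl⟩)
      rw [conj_inl] at hmem
      obtain ⟨h', hh', he⟩ := Subgroup.mem_map.mp hmem
      have := SemidirectProduct.inl_injective he
      rwa [this] at hh'
    have hr : 0 ≤ r := by
      by_contra hrneg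
      push_neg at hrneg
      have h1 := hconj (FreeGroup.of n) (Subgroup.subset_closure ⟨n, le_refl n, rfl⟩)
      rw [hβc] at h1
      have h2 := piN_fix h1
      have hpi1 : piN n (FreeGroup.of (n + r)) = 1 := by
        have hnot : ¬ n ≤ n + r := by omega
        simp [piN, hnot]
      have h3 : piN n (v * FreeGroup.of (n + r) * v⁻¹) = 1 := by
        rw [map_mul, map_mul, map_inv, hpi1, mul_one, mul_inv_cancel]
      rw [h2] at h3
      have h4 : FreeGroup.of (n + r) = 1 := by
        have h5 : FreeGroup.of (n + r) = v⁻¹ * (v * FreeGroup.of (n + r) * v⁻¹) * v := by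
          group
        rw [h3] at h5
        rw [h5]; group
      exact FreeGroup.of_ne_one _ h4
    have hv : v ∈ Subgroup.closure (HS n) := by
      set L := v.toWord with hL_def
      set K : ℤ := (L.map Prod.fst).foldr max (n + r) with hK_def
      set m : ℤ := max (n + r) (K + 1) with hm_def
      have hmK : K + 1 ≤ m := le_max_right _ _
      have hmnr : n + r ≤ m := le_max_left _ _
      have hmL : ∀ l ∈ L, l.1 ≠ m := by
        intro l hl
        have h5 : l.1 ≤ K := le_foldr_max _ _ _ (List.mem_map_of_mem hl)
        omega
      have hmn : n ≤ m - r := by omega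
      have h1 := hconj (FreeGroup.of (m - r)) (Subgroup.subset_closure ⟨m - r, hmn, rfl⟩)
      rw [hβc, show m - r + r = m by ring] at h1
      have h2 := letters_ge h1
      rw [toWord_conj hmL] at h2
      have h6 : ∀ l ∈ L, n ≤ l.1 := fun l hl =>
        h2 l (by simp [show l ∈ v.toWord from hl])
      have h7 := mk_mem L h6
      rwa [hL_def, FreeGroup.mk_toWord] at h7
    refine ⟨v, hv, r, hr, ?_⟩
    rw [hc]
    exact (SemidirectProduct.inl_left_mul_inr_right g).symm
  · rintro ⟨v, hv, r, hr, rfl⟩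
    intro x hx
    obtain ⟨h, hh, rfl⟩ := Subgroup.mem_map.mp hx
    rw [conj_inl]
    have hleft : (SemidirectProduct.inl v *
        SemidirectProduct.inr (Multiplicative.ofAdd r) :
        FreeGroup ℤ ⋊[β] Multiplicative ℤ).left = v := by
      simp [SemidirectProduct.mul_left]
    have hright : (SemidirectProduct.inl v *
        SemidirectProduct.inr (Multiplicative.ofAdd r) :
        FreeGroup ℤ ⋊[β] Multiplicative ℤ).right = Multiplicative.ofAdd r := by
      simp [SemidirectProduct.mul_right]
    rw [hleft, hright]
    have hβH : β (Multiplicative.ofAdd r) h ∈ Subgroup.closure (HS n) := by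
      clear hx hleft hright
      induction hh using Subgroup.closure_induction with
      | mem x hx' =>
          obtain ⟨i, hi, rfl⟩ := hx'
          rw [hβ]
          exact Subgroup.subset_closure ⟨i + r, by omega, rfl⟩
      | one => rw [map_one]; exact one_mem _
      | mul x y _ _ hx' hy' => rw [map_mul]; exact mul_mem hx' hy'
      | inv x _ hx' => rw [map_inv]; exact inv_mem hx'
    exact Subgroup.mem_map.mpr ⟨_, mul_mem (mul_mem hv hβH) (inv_mem hv), rfl⟩
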